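/- Let k ∈ {1,…,D−1}, let 0 ≤ t_0 ≤ t < s, and let v be a trajectory of the consensus system defined on [t_0, s] such that G(u) satisfies Hypothesis 1 for all u ∈ [t_0, s]. Then Δ_{U_k}(s) ≤ Δ_N(t_0) − e^{−(m−α_k)(s−t)}·(Δ_N(t_0) − Δ_{U_k}(t)). -/

import Mathlib

open scoped Classical

/-- The pair `(SS_k, U_k)` of the hierarchical structure attached to the graph with
adjacency `ta` and root `r`:
`SS_0 = {r}`, `U_k = ⋃_{l ≤ k} SS_l`, `SS_{k+1} = {i | ∃ j ∈ SS_k, ta i j = 1} \ U_k`. -/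
noncomputable def hierSU {n : ℕ} (ta : Fin n → Fin n → ℝ) (r : Fin n) :
    ℕ → Finset (Fin n) × Finset (Fin n)
  | 0 => ({r}, {r})
  | k + 1 =>
      let p := hierSU ta r k
      let s := (Finset.univ.filter fun i => ∃ j ∈ p.1, ta i j = 1) \ p.2
      (s, p.2 ∪ s)

/-- `U_k`. -/
noncomputable def hierU {n : ℕ} (ta : Fin n → Fin n → ℝ) (r : Fin n) (k : ℕ) :
    Finset (Fin n) :=
  (hierSU ta r k).2

/-- `α_k = min_{i ∈ U_{k+1}} ∑_{j ∈ U_k} ta i j`. -/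
noncomputable def hierAlpha {n : ℕ} (ta : Fin n → Fin n → ℝ) (r : Fin n) (k : ℕ) : ℝ :=
  sInf ((fun i => ∑ j ∈ hierU ta r k, ta i j) '' ↑(hierU ta r (k + 1)))

/-- Hypothesis 1 (preservation of the hierarchical structure) for a graph with
adjacency `a`. -/
def HypOne {n : ℕ} (m D : ℕ) (ta : Fin n → Fin n → ℝ) (r : Fin n)
    (a : Fin n → Fin n → ℝ) : Prop :=
  (∀ i ∈ hierU ta r 1, a i r = 1) ∧
  ∀ k : ℕ, 1 ≤ k → k ≤ D - 1 → ∀ i ∈ hierU ta r (k + 1),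
    hierAlpha ta r k ≤ ∑ j ∈ hierU ta r k, a i j ∧
    ∑ j ∈ (hierU ta r k)ᶜ, a i j ≤ (m : ℝ) - hierAlpha ta r k

/-- Velocity diameter of the set `S` of agents. -/
noncomputable def sdiam {n d : ℕ} (S : Set (Fin n))
    (v : Fin n → EuclideanSpace ℝ (Fin d)) : ℝ :=
  sSup {x | ∃ i ∈ S, ∃ j ∈ S, x = ‖v i - v j‖}

/-- Lemma 9: under preservation of the hierarchical structure (Hypothesis 1),
for `k ∈ {1, …, D-1}` and times `0 ≤ t₀ ≤ t < s`,
`Δ_{U_k}(s) ≤ Δ_N(t₀) - e^{-(m - α_k)(s - t)} (Δ_N(t₀) - Δ_{U_k}(t))`. -/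
private lemma eps_le {x y C : ℝ} (hC : 0 < C) (h : ∀ ε : ℝ, 0 < ε → x ≤ y + ε * C) : x ≤ y := by
  by_contra hc
  push_neg at hc
  have h2 := h ((x - y) / (2 * C)) (div_pos (by linarith) (by linarith))
  have : (x - y) / (2 * C) * C = (x - y) / 2 := by field_simp
  rw [this] at h2
  linarith

open Set Filter Topology in
private lemma maxcomp {ι : Type*} (T : Finset ι) (hT : T.Nonempty)
    (f f' : ι → ℝ → ℝ) {a b : ℝ}
    (hderiv : ∀ i ∈ T, ∀ x ∈ Icc a b, HasDerivAt (f i) (f' i x) x)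
    {B B' : ℝ → ℝ} (hB : ∀ x, HasDerivAt B (B' x) x)
    (hinit : ∀ i ∈ T, f i a ≤ B a)
    (bound : ∀ x ∈ Ico a b, ∀ i ∈ T, f i x = B x → (∀ j ∈ T, f j x ≤ B x) → f' i x < B' x) :
    ∀ x ∈ Icc a b, ∀ i ∈ T, f i x ≤ B x := by
  classical
  set F : ℝ → ℝ := fun x => T.sup' hT fun i => f i x with hF
  have hA : ∀ x : ℝ, ((T.filter fun i => f i x = F x)).Nonempty := by
    intro x
    obtain ⟨i, hiT, hieq⟩ := T.exists_mem_eq_sup' hT (fun i => f i x)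
    exact ⟨i, Finset.mem_filter.2 ⟨hiT, hieq.symm⟩⟩
  set F' : ℝ → ℝ := fun x => (T.filter fun i => f i x = F x).sup' (hA x) (fun i => f' i x)
    with hF'
  have Fcont : ContinuousOn F (Icc a b) :=
    ContinuousOn.finset_sup'_apply hT fun i hi x hx => ((hderiv i hi x hx).continuousAt).continuousWithinAt
  have hslope : ∀ x ∈ Ico a b, ∀ r, F' x < r → ∃ᶠ z in 𝓝[>] x, slope F x z < r := by
    intro x hx r hr
    have hev : ∀ j ∈ T, ∀ᶠ z in 𝓝[>] x, (f j z - F x) / (z - x) < r := by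
      intro j hj
      by_cases hjx : f j x = F x
      · have hj' : f' j x < r :=
          lt_of_le_of_lt
            (Finset.le_sup' (fun i => f' i x) (Finset.mem_filter.2 ⟨hj, hjx⟩)) hr
        have h1 := hasDerivAt_iff_tendsto_slope.1 (hderiv j hj x (Ico_subset_Icc_self hx))
        have h2 : ∀ᶠ z in 𝓝[≠] x, slope (f j) x z < r := h1 (Iio_mem_nhds hj')
        have h3 : ∀ᶠ z in 𝓝[>] x, slope (f j) x z < r :=
          h2.filter_mono (nhdsWithin_mono x (fun z hz => ne_of_gt hz))
        refine h3.mono fun z hz => ?_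
        rwa [slope_def_field, hjx] at hz
      · have hjlt : f j x < F x :=
          lt_of_le_of_ne (Finset.le_sup' (fun i => f i x) hj) hjx
        have hnum : Tendsto (fun z => f j z - F x) (𝓝[>] x) (𝓝 (f j x - F x)) := by
          have hc : ContinuousAt (f j) x :=
            (hderiv j hj x (Ico_subset_Icc_self hx)).continuousAt
          exact (hc.tendsto.sub tendsto_const_nhds).mono_left nhdsWithin_le_nhds
        have hden : Tendsto (fun z : ℝ => (z - x)⁻¹) (𝓝[>] x) atTop := by
          apply Filter.Tendsto.inv_tendsto_nhdsGT_zero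
          apply tendsto_nhdsWithin_of_tendsto_nhds_of_eventually_within
          · have : Tendsto (fun z : ℝ => z - x) (𝓝 x) (𝓝 (x - x)) :=
              (continuous_id.sub continuous_const).continuousAt
            simpa using this.mono_left nhdsWithin_le_nhds
          · filter_upwards [self_mem_nhdsWithin] with z hz
            simpa using sub_pos.2 (Set.mem_Ioi.1 hz)
        have hbot : Tendsto (fun z => (f j z - F x) * (z - x)⁻¹) (𝓝[>] x) atBot :=
          Filter.Tendsto.neg_mul_atTop (by linarith) hnum hden
        have := hbot.eventually (eventually_lt_atBot r)
        refine this.mono fun z hz => ?_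
        rwa [div_eq_mul_inv]
    have hall : ∀ᶠ z in 𝓝[>] x, ∀ j ∈ T, (f j z - F x) / (z - x) < r := by
      rw [eventually_all_finset]
      exact hev
    refine (hall.mono fun z hz => ?_).frequently
    obtain ⟨i, hiT, hieq⟩ := T.exists_mem_eq_sup' hT (fun i => f i z)
    rw [slope_def_field]
    calc (F z - F x) / (z - x) = (f i z - F x) / (z - x) := by rw [hF]; simp only; rw [hieq]
      _ < r := hz i hiT
  have hFinit : F a ≤ B a := Finset.sup'_le hT _ hinit
  have hbound : ∀ x ∈ Ico a b, F x = B x → F' x < B' x := by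
    intro x hx hFB
    rw [hF']
    refine (Finset.sup'_lt_iff (hA x)).2 fun i hi => ?_
    obtain ⟨hiT, hieq⟩ := Finset.mem_filter.1 hi
    exact bound x hx i hiT (hieq.trans hFB)
      (fun j hj => (Finset.le_sup' (fun i => f i x) hj).trans hFB.le)
  have := image_le_of_liminf_slope_right_lt_deriv_boundary (f' := F') Fcont hslope hFinit hB hbound
  intro x hx i hi
  exact (Finset.le_sup' (fun i => f i x) hi).trans (this hx)

open Set Filter Topology
open scoped RealInnerProductSpace

private lemma hierU_mono {n : ℕ} (ta : Fin n → Fin n → ℝ) (r : Fin n) (l : ℕ) :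
    hierU ta r l ⊆ hierU ta r (l + 1) := by
  show (hierSU ta r l).2 ⊆ (hierSU ta r (l + 1)).2
  rw [hierSU]
  exact Finset.subset_union_left

private lemma r_mem_hierU {n : ℕ} (ta : Fin n → Fin n → ℝ) (r : Fin n) (l : ℕ) :
    r ∈ hierU ta r l := by
  induction l with
  | zero => simp [hierU, hierSU]
  | succ l ih => exact hierU_mono ta r l ih


set_option maxHeartbeats 1000000 in
theorem stmt7 {n d : ℕ} (m D : ℕ) (hm : 1 ≤ m)
    (ta : Fin n → Fin n → ℝ) (hta : ∀ i j, ta i j = 0 ∨ ta i j = 1)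
    (r : Fin n)
    (hspan : hierU ta r D = Finset.univ)
    (hdepth : ∀ k < D, hierU ta r k ≠ Finset.univ)
    (a : ℝ → Fin n → Fin n → ℝ)
    (ha01 : ∀ t i j, a t i j = 0 ∨ a t i j = 1)
    (hreg : ∀ t i, ∑ j, a t i j = (m : ℝ))
    (v : ℝ → Fin n → EuclideanSpace ℝ (Fin d))
    (k : ℕ) (hk1 : 1 ≤ k) (hk2 : k ≤ D - 1)
    (t0 t s : ℝ) (ht0 : 0 ≤ t0) (ht : t0 ≤ t) (hts : t < s)
    (htraj : ∀ i : Fin n, ∀ u ∈ Set.Icc t0 s,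
      HasDerivAt (fun w => v w i) (∑ j, a u i j • (v u j - v u i)) u)
    (hhyp : ∀ u ∈ Set.Icc t0 s, HypOne m D ta r (a u)) :
    sdiam ↑(hierU ta r k) (v s) ≤
      sdiam Set.univ (v t0) -
        Real.exp (-((m : ℝ) - hierAlpha ta r k) * (s - t)) *
          (sdiam Set.univ (v t0) - sdiam ↑(hierU ta r k) (v t)) := by
  classical
  haveI : Nonempty (Fin n) := ⟨r⟩
  have ht0s : t0 ≤ s := ht.trans hts.le
  set S : Finset (Fin n) := hierU ta r k with hSdef
  have hSne : S.Nonempty := ⟨r, r_mem_hierU ta r k⟩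
  set lam : ℝ := (m : ℝ) - hierAlpha ta r k with hlamdef
  have hanneg : ∀ u i j, 0 ≤ a u i j := by
    intro u i j; rcases ha01 u i j with h | h <;> rw [h] <;> norm_num
  have halam : ∀ u ∈ Icc t0 s, ∀ i ∈ S, ∑ j ∈ Sᶜ, a u i j ≤ lam :=
    fun u hu i hi => ((hhyp u hu).2 k hk1 hk2 i (hierU_mono ta r k hi)).2
  have hlam0 : (0 : ℝ) ≤ lam := by
    have h1 := ((hhyp t0 ⟨le_rfl, ht0s⟩).2 k hk1 hk2 r
      (hierU_mono ta r k (r_mem_hierU ta r k))).1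
    have h2 : ∑ j ∈ hierU ta r k, a t0 r j ≤ (m : ℝ) := by
      rw [← hreg t0 r]
      exact Finset.sum_le_sum_of_subset_of_nonneg (Finset.subset_univ _)
        (fun j _ _ => hanneg t0 r j)
    rw [hlamdef]; linarith
  -- derivative of scalar projections
  have hp : ∀ (φ : EuclideanSpace ℝ (Fin d)) (i : Fin n), ∀ u ∈ Icc t0 s,
      HasDerivAt (fun w => ⟪φ, v w i⟫)
        (∑ l, a u i l * (⟪φ, v u l⟫ - ⟪φ, v u i⟫)) u := by
    intro φ i u hu
    have h := (innerSL ℝ φ).hasFDerivAt.comp_hasDerivAt u (htraj i u hu)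
    simpa [Function.comp_def, inner_sum, real_inner_smul_right, inner_sub_right] using h
  set P : EuclideanSpace ℝ (Fin d) → ℝ :=
    fun φ => Finset.univ.sup' Finset.univ_nonempty (fun i => ⟪φ, v t0 i⟫) with hPdef
  set MS : EuclideanSpace ℝ (Fin d) → ℝ :=
    fun φ => S.sup' hSne (fun i => ⟪φ, v t i⟫) with hMSdef
  -- Phase 1 : all projections stay below their initial max
  have phase1 : ∀ (φ : EuclideanSpace ℝ (Fin d)), ∀ u ∈ Icc t0 s, ∀ i : Fin n,
      ⟪φ, v u i⟫ ≤ P φ := by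
    intro φ u hu i
    refine eps_le (C := 1 + (u - t0)) (by cases hu; linarith) ?_
    intro ε hε
    have hB : ∀ x : ℝ, HasDerivAt (fun x => P φ + ε * (1 + (x - t0))) ε x := by
      intro x
      have h := ((((hasDerivAt_id x).sub_const t0).const_add (1 : ℝ)).const_mul ε).const_add (P φ)
      simpa using h
    have key := maxcomp Finset.univ Finset.univ_nonempty
      (fun i u => ⟪φ, v u i⟫)
      (fun i x => ∑ l, a x i l * (⟪φ, v x l⟫ - ⟪φ, v x i⟫))
      (a := t0) (b := s)
      (fun i _ x hx => hp φ i x hx) hB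
      (fun i _ => by
        have h1 : ⟪φ, v t0 i⟫ ≤ P φ :=
          Finset.le_sup' (fun i => (⟪φ, v t0 i⟫ : ℝ)) (Finset.mem_univ i)
        have : (0:ℝ) ≤ ε * (1 + (t0 - t0)) := by nlinarith
        linarith)
      (fun x hx i _ hieq hall => by
        have hsum : (∑ l, a x i l * (⟪φ, v x l⟫ - ⟪φ, v x i⟫)) ≤ 0 := by
          refine Finset.sum_nonpos fun l _ => mul_nonpos_of_nonneg_of_nonpos (hanneg x i l) ?_
          have := hall l (Finset.mem_univ l)
          rw [hieq]
          linarith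
        linarith)
    exact key u hu i (Finset.mem_univ i)
  -- Phase 2 : contraction on S over [t, s]
  have phase2 : ∀ (φ : EuclideanSpace ℝ (Fin d)), ∀ i ∈ S,
      ⟪φ, v s i⟫ ≤ P φ - Real.exp (-lam * (s - t)) * (P φ - MS φ) := by
    intro φ i hi
    refine eps_le (C := 1 + (s - t)) (by linarith) ?_
    intro ε hε
    have hBd : ∀ x : ℝ, HasDerivAt
        (fun u => P φ - Real.exp (-lam * (u - t)) * (P φ - MS φ) + ε * (1 + (u - t)))
        (lam * (Real.exp (-lam * (x - t)) * (P φ - MS φ)) + ε) x := by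
      intro x
      have h1 : HasDerivAt (fun u : ℝ => -lam * (u - t)) (-lam) x := by
        simpa using ((hasDerivAt_id x).sub_const t).const_mul (-lam)
      have h2 : HasDerivAt (fun u : ℝ => Real.exp (-lam * (u - t)))
          (Real.exp (-lam * (x - t)) * -lam) x := (Real.hasDerivAt_exp _).comp x h1
      have h3 : HasDerivAt (fun u : ℝ => P φ - Real.exp (-lam * (u - t)) * (P φ - MS φ))
          (-(Real.exp (-lam * (x - t)) * -lam * (P φ - MS φ))) x :=
        (h2.mul_const _).const_sub _
      have h4 : HasDerivAt (fun u : ℝ => ε * (1 + (u - t))) (ε * 1) x :=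
        (((hasDerivAt_id x).sub_const t).const_add 1).const_mul ε
      have h5 := h3.add h4
      exact h5.congr_deriv (by ring)
    have key := maxcomp S hSne
      (fun i u => ⟪φ, v u i⟫)
      (fun i x => ∑ l, a x i l * (⟪φ, v x l⟫ - ⟪φ, v x i⟫))
      (a := t) (b := s)
      (fun j _ x hx => hp φ j x ⟨ht.trans hx.1, hx.2⟩) hBd
      (fun j hj => by
        have h1 : ⟪φ, v t j⟫ ≤ MS φ := Finset.le_sup' (fun i => (⟪φ, v t i⟫ : ℝ)) hj
        have h2 : Real.exp (-lam * (t - t)) = 1 := by norm_num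
        rw [h2]
        nlinarith)
      (fun x hx j hj hjeq hall => by
        have hx' : x ∈ Icc t0 s := ⟨ht.trans hx.1, hx.2.le⟩
        have e1 : ∑ l ∈ S, a x j l * (⟪φ, v x l⟫ - ⟪φ, v x j⟫) ≤ 0 := by
          refine Finset.sum_nonpos fun l hl => mul_nonpos_of_nonneg_of_nonpos (hanneg x j l) ?_
          have := hall l hl
          rw [hjeq]
          linarith
        have e2 : ∑ l ∈ Sᶜ, a x j l * (⟪φ, v x l⟫ - ⟪φ, v x j⟫)
            ≤ ∑ l ∈ Sᶜ, a x j l * (P φ - ⟪φ, v x j⟫) := by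
          refine Finset.sum_le_sum fun l _ => mul_le_mul_of_nonneg_left ?_ (hanneg x j l)
          have := phase1 φ x hx' l
          linarith
        have e3 : ∑ l ∈ Sᶜ, a x j l * (P φ - ⟪φ, v x j⟫)
            = (∑ l ∈ Sᶜ, a x j l) * (P φ - ⟪φ, v x j⟫) := by
          rw [Finset.sum_mul]
        have e4 : (∑ l ∈ Sᶜ, a x j l) * (P φ - ⟪φ, v x j⟫)
            ≤ lam * (P φ - ⟪φ, v x j⟫) := by
          refine mul_le_mul_of_nonneg_right (halam x hx' j hj) ?_
          have := phase1 φ x hx' j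
          linarith
        have hsplit : (∑ l, a x j l * (⟪φ, v x l⟫ - ⟪φ, v x j⟫))
            = (∑ l ∈ S, a x j l * (⟪φ, v x l⟫ - ⟪φ, v x j⟫))
              + ∑ l ∈ Sᶜ, a x j l * (⟪φ, v x l⟫ - ⟪φ, v x j⟫) :=
          (Finset.sum_add_sum_compl S _).symm
        have h5 : (∑ l, a x j l * (⟪φ, v x l⟫ - ⟪φ, v x j⟫))
            ≤ lam * (P φ - ⟪φ, v x j⟫) := by
          rw [hsplit]; rw [e3] at e2; linarith
        rw [hjeq] at h5
        have h6 : (0:ℝ) ≤ lam * (ε * (1 + (x - t))) := by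
          have : (0:ℝ) ≤ 1 + (x - t) := by cases hx; linarith
          have : (0:ℝ) ≤ ε * (1 + (x - t)) := by nlinarith
          nlinarith
        nlinarith [h5, h6, hε])
    have := key s ⟨hts.le, le_rfl⟩ i hi
    exact this
  -- assembly
  have bdd : ∀ (w : Fin n → EuclideanSpace ℝ (Fin d)) (S' : Set (Fin n)),
      BddAbove {x | ∃ i ∈ S', ∃ j ∈ S', x = ‖w i - w j‖} := by
    intro w S'
    apply Set.Finite.bddAbove
    apply Set.Finite.subset (Set.finite_range (fun p : Fin n × Fin n => ‖w p.1 - w p.2‖))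
    rintro x ⟨i, -, j, -, rfl⟩
    exact ⟨(i, j), rfl⟩
  have hmemle : ∀ (w : Fin n → EuclideanSpace ℝ (Fin d)) (S' : Set (Fin n)) (i j : Fin n),
      i ∈ S' → j ∈ S' → ‖w i - w j‖ ≤ sdiam S' w := by
    intro w S' i j hi hj
    exact le_csSup (bdd w S') ⟨i, hi, j, hj, rfl⟩
  have hD0 : 0 ≤ sdiam Set.univ (v t0) := by
    have := hmemle (v t0) Set.univ r r trivial trivial
    simpa using this
  have hrS : r ∈ (↑S : Set (Fin n)) := by
    rw [Finset.mem_coe]; exact r_mem_hierU ta r k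
  have hDt0 : 0 ≤ sdiam (↑S : Set (Fin n)) (v t) := by
    have := hmemle (v t) ↑S r r hrS hrS
    simpa using this
  set c : ℝ := Real.exp (-lam * (s - t)) with hcdef
  have hc0 : 0 < c := Real.exp_pos _
  have hc1 : c ≤ 1 := by
    rw [hcdef, Real.exp_le_one_iff]
    nlinarith
  show sdiam (↑S : Set (Fin n)) (v s) ≤
    sdiam Set.univ (v t0) - c * (sdiam Set.univ (v t0) - sdiam (↑S : Set (Fin n)) (v t))
  have hgoal : sdiam (↑S : Set (Fin n)) (v s)
      = sSup {x | ∃ i ∈ (↑S : Set (Fin n)), ∃ j ∈ (↑S : Set (Fin n)), x = ‖v s i - v s j‖} :=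
    rfl
  rw [hgoal]
  apply Real.sSup_le
  · rintro x ⟨i0, hi0, j0, hj0, rfl⟩
    simp only [Finset.mem_coe] at hi0 hj0
    by_cases hw : v s i0 = v s j0
    · rw [hw]
      simp only [sub_self, norm_zero]
      nlinarith [mul_nonneg (sub_nonneg.2 hc1) hD0, mul_nonneg hc0.le hDt0]
    · set w : EuclideanSpace ℝ (Fin d) := v s i0 - v s j0 with hwdef
      have hwne : w ≠ 0 := sub_ne_zero.2 hw
      set φ : EuclideanSpace ℝ (Fin d) := ‖w‖⁻¹ • w with hφdef
      have hφ : ‖φ‖ = 1 := norm_smul_inv_norm hwne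
      have hinner : ⟪φ, w⟫ = ‖w‖ := by
        have hwn : ‖w‖ ≠ 0 := norm_ne_zero_iff.2 hwne
        show ⟪(‖w‖⁻¹ • w : EuclideanSpace ℝ (Fin d)), w⟫ = ‖w‖
        rw [real_inner_smul_left, real_inner_self_eq_norm_mul_norm]
        field_simp
      have hA := phase2 φ i0 hi0
      have hB2 := phase2 (-φ) j0 hj0
      have hnorm : ‖v s i0 - v s j0‖ = ⟪φ, v s i0⟫ + ⟪(-φ), v s j0⟫ := by
        rw [inner_neg_left]
        have h1 : ⟪φ, v s i0⟫ - ⟪φ, v s j0⟫ = ⟪φ, w⟫ := by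
          rw [hwdef, inner_sub_right]
        rw [← hwdef]
        linarith [hinner]
      obtain ⟨i2, hi2, he1⟩ := Finset.exists_mem_eq_sup' Finset.univ_nonempty
        (fun i => ⟪φ, v t0 i⟫)
      obtain ⟨j2, hj2, he2⟩ := Finset.exists_mem_eq_sup' Finset.univ_nonempty
        (fun i => ⟪(-φ), v t0 i⟫)
      have hPP : P φ + P (-φ) ≤ sdiam Set.univ (v t0) := by
        simp only [hPdef]
        rw [he1, he2, inner_neg_left]
        have h2 : ⟪φ, v t0 i2⟫ - ⟪φ, v t0 j2⟫ = ⟪φ, v t0 i2 - v t0 j2⟫ :=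
          (inner_sub_right _ _ _).symm
        have h3 : ⟪φ, v t0 i2 - v t0 j2⟫ ≤ ‖φ‖ * ‖v t0 i2 - v t0 j2‖ :=
          real_inner_le_norm _ _
        have h4 := hmemle (v t0) Set.univ i2 j2 trivial trivial
        rw [hφ, one_mul] at h3
        linarith
      obtain ⟨i3, hi3, he3⟩ := Finset.exists_mem_eq_sup' hSne (fun i => ⟪φ, v t i⟫)
      obtain ⟨j3, hj3, he4⟩ := Finset.exists_mem_eq_sup' hSne (fun i => ⟪(-φ), v t i⟫)
      have hMM : MS φ + MS (-φ) ≤ sdiam (↑S : Set (Fin n)) (v t) := by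
        simp only [hMSdef]
        rw [he3, he4, inner_neg_left]
        have h2 : ⟪φ, v t i3⟫ - ⟪φ, v t j3⟫ = ⟪φ, v t i3 - v t j3⟫ :=
          (inner_sub_right _ _ _).symm
        have h3 : ⟪φ, v t i3 - v t j3⟫ ≤ ‖φ‖ * ‖v t i3 - v t j3‖ :=
          real_inner_le_norm _ _
        have h4 := hmemle (v t) ↑S i3 j3 (Finset.mem_coe.2 hi3) (Finset.mem_coe.2 hj3)
        rw [hφ, one_mul] at h3
        linarith
      have hX1 : (1 - c) * (P φ + P (-φ)) ≤ (1 - c) * sdiam Set.univ (v t0) :=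
        mul_le_mul_of_nonneg_left hPP (by linarith)
      have hX2 : c * (MS φ + MS (-φ)) ≤ c * sdiam (↑S : Set (Fin n)) (v t) :=
        mul_le_mul_of_nonneg_left hMM hc0.le
      rw [hnorm]
      nlinarith [hA, hB2, hX1, hX2]
  · nlinarith [mul_nonneg (sub_nonneg.2 hc1) hD0, mul_nonneg hc0.le hDt0]
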